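/- arXiv:2105.01273 — 2 statements merged into one kernel-verified Lean document; each statement's English description precedes it below -/
import Mathlib

section
/- For every matrix X in M_n(ℝ), the transpose Xᵀ is conjugate to X by some element of GL_n(ℝ); that is, there exists P ∈ GL_n(ℝ) with Xᵀ = P X P⁻¹. -/
open Matrix Polynomial

namespace TransposeConjAux

variable {K : Type*} [Field K] [DecidableEq K]

/-- The "coefficient of `x^(d-1)`" functional on `K[X] ⧸ (q)`. -/
noncomputable def lam (q : K[X]) (x : K[X] ⧸ Ideal.span {q}) : K :=
  ((Quotient.out x : K[X]) %ₘ normalize q).coeff ((normalize q).natDegree - 1)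

lemma lam_mk {q : K[X]} (hq : q ≠ 0) (p : K[X]) :
    lam q (Ideal.Quotient.mk (Ideal.span {q}) p)
      = (p %ₘ normalize q).coeff ((normalize q).natDegree - 1) := by
  have hm : (normalize q).Monic := monic_normalize hq
  set o : K[X] := Quotient.out (Ideal.Quotient.mk (Ideal.span {q}) p) with ho
  have hout : Ideal.Quotient.mk (Ideal.span {q}) o = Ideal.Quotient.mk _ p := by
    rw [ho, ← Ideal.Quotient.mk_eq_mk]
    exact Quotient.out_eq' (Ideal.Quotient.mk (Ideal.span {q}) p)
  have hdvd : normalize q ∣ o - p := by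
    rw [normalize_dvd_iff, ← Ideal.mem_span_singleton]
    exact Ideal.Quotient.eq.mp hout
  have h0 : (o - p) %ₘ normalize q = 0 := (modByMonic_eq_zero_iff_dvd hm).mpr hdvd
  have hsub : o %ₘ normalize q - p %ₘ normalize q = 0 := by
    have := _root_.map_sub (modByMonicHom (normalize q)) o p
    simp only [modByMonicHom_apply] at this
    rw [← this, h0]
  rw [lam, ← ho, sub_eq_zero.mp hsub]

lemma lam_zero {q : K[X]} (hq : q ≠ 0) : lam q 0 = 0 := by
  have : (0 : K[X] ⧸ Ideal.span {q}) = Ideal.Quotient.mk _ 0 := by simp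
  rw [this, lam_mk hq, zero_modByMonic, coeff_zero]

lemma lam_add {q : K[X]} (hq : q ≠ 0) (x y : K[X] ⧸ Ideal.span {q}) :
    lam q (x + y) = lam q x + lam q y := by
  obtain ⟨a, rfl⟩ := Ideal.Quotient.mk_surjective x
  obtain ⟨b, rfl⟩ := Ideal.Quotient.mk_surjective y
  rw [← _root_.map_add, lam_mk hq, lam_mk hq, lam_mk hq, add_modByMonic, coeff_add]

lemma lam_smul {q : K[X]} (hq : q ≠ 0) (c : K) (x : K[X] ⧸ Ideal.span {q}) :
    lam q (c • x) = c * lam q x := by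
  obtain ⟨a, rfl⟩ := Ideal.Quotient.mk_surjective x
  have h1 : c • (Ideal.Quotient.mk (Ideal.span {q}) a) = Ideal.Quotient.mk _ (c • a) := by
    rw [← Ideal.Quotient.mkₐ_eq_mk (R₁ := K), ← _root_.map_smul]
  rw [h1, lam_mk hq, lam_mk hq, smul_modByMonic, coeff_smul, smul_eq_mul]


lemma quot_smul_eq_mk_mul {q : K[X]} (r : K[X]) (y : K[X] ⧸ Ideal.span {q}) :
    r • y = Ideal.Quotient.mk (Ideal.span {q}) r * y := by
  obtain ⟨x, rfl⟩ := Ideal.Quotient.mk_surjective y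
  rw [← _root_.map_mul, ← smul_eq_mul, ← Ideal.Quotient.mk_eq_mk, ← Ideal.Quotient.mk_eq_mk,
    Submodule.Quotient.mk_smul]

/-- Nondegeneracy of the pairing `(x, y) ↦ lam (x * y)`. -/
lemma lam_nondeg {q : K[X]} (hq : q ≠ 0) (x : K[X] ⧸ Ideal.span {q}) (hx : x ≠ 0) :
    ∃ y, lam q (x * y) ≠ 0 := by
  have hm : (normalize q).Monic := monic_normalize hq
  obtain ⟨a, rfl⟩ := Ideal.Quotient.mk_surjective x
  set m : K[X] := normalize q with hmdef
  set r : K[X] := a %ₘ m with hr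
  have hr0 : r ≠ 0 := by
    intro h
    apply hx
    rw [Ideal.Quotient.eq_zero_iff_mem, Ideal.mem_span_singleton, ← normalize_dvd_iff]
    exact (modByMonic_eq_zero_iff_dvd hm).mp h
  have hdeg : r.degree < m.degree := degree_modByMonic_lt a hm
  have hnd : r.natDegree < m.natDegree :=
    natDegree_lt_natDegree hr0 hdeg
  set d : ℕ := m.natDegree with hd
  set k : ℕ := r.natDegree with hk
  set j : ℕ := d - 1 - k with hj
  refine ⟨Ideal.Quotient.mk _ (X ^ j), ?_⟩
  rw [← _root_.map_mul, lam_mk hq]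
  have key : (a * X ^ j) %ₘ m = r * X ^ j := by
    conv_lhs => rw [← modByMonic_add_div a m]
    rw [add_mul, add_modByMonic]
    have h1 : (m * (a /ₘ m) * X ^ j) %ₘ m = 0 := by
      rw [modByMonic_eq_zero_iff_dvd hm, mul_assoc]
      exact dvd_mul_right _ _
    have h2 : (r * X ^ j) %ₘ m = r * X ^ j := by
      rw [modByMonic_eq_self_iff hm]
      have : (r * X ^ j).degree = r.degree + j := by
        rw [degree_mul, degree_X_pow]
      rw [this, degree_eq_natDegree hr0, degree_eq_natDegree hm.ne_zero]
      rw [← hk, ← hd]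
      norm_cast
      omega
    rw [h1, h2, add_zero]
  rw [key]
  have hidx : d - 1 = k + j := by omega
  rw [← hmdef, ← hd, hidx, coeff_mul_X_pow]
  exact leadingCoeff_ne_zero.mpr hr0

end TransposeConjAux

open TransposeConjAux

set_option maxHeartbeats 2000000 in
/-- Every real square matrix is conjugate to its transpose by an element of `GL n ℝ`. -/
theorem transpose_conjugate (n : ℕ) (X : Matrix (Fin n) (Fin n) ℝ) :
    ∃ P : GL (Fin n) ℝ, Xᵀ = (P : Matrix (Fin n) (Fin n) ℝ) * X *
      ((P⁻¹ : GL (Fin n) ℝ) : Matrix (Fin n) (Fin n) ℝ) := by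
  classical
  set V : Type := Fin n → ℝ with hV
  let f : V →ₗ[ℝ] V := X.mulVecLin
  -- the ℝ[X]-module attached to f is finitely generated and torsion
  have htors : Module.IsTorsion ℝ[X] (Module.AEval' f) := by
    intro x
    refine ⟨⟨f.charpoly, mem_nonZeroDivisors_of_ne_zero f.charpoly_monic.ne_zero⟩, ?_⟩
    have h1 : (Module.AEval'.of f).symm (f.charpoly • x)
        = aeval f f.charpoly • (Module.AEval'.of f).symm x := by
      exact Module.AEval.of_symm_smul f f.charpoly x
    rw [f.aeval_self_charpoly] at h1
    rw [zero_smul] at h1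
    exact (map_eq_zero_iff _ (Module.AEval'.of f).symm.injective).mp h1
  obtain ⟨ι, hfin, p, hirr, e, ⟨ψ⟩⟩ :=
    Module.equiv_directSum_of_isTorsion (R := ℝ[X]) (M := Module.AEval' f) htors
  letI := hfin
  let q : ι → ℝ[X] := fun i => p i ^ e i
  have hq0 : ∀ i, q i ≠ 0 := fun i => pow_ne_zero _ (hirr i).ne_zero
  let N : Type := DirectSum ι (fun i => ℝ[X] ⧸ Ideal.span {q i})
  have ψ' : Module.AEval' f ≃ₗ[ℝ[X]] N := ψ
  let θ : V ≃ₗ[ℝ] N := (Module.AEval'.of f).trans (ψ'.restrictScalars ℝ)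
  -- the bilinear pairing
  let B2 : N → N → ℝ := fun a b => ∑ i, lam (q i) (a i * b i)
  have hB2addl : ∀ a a' b, B2 (a + a') b = B2 a b + B2 a' b := by
    intro a a' b
    rw [← Finset.sum_add_distrib]
    refine Finset.sum_congr rfl fun i _ => ?_
    rw [DirectSum.add_apply, add_mul, lam_add (hq0 i)]
  have hB2addr : ∀ a b b', B2 a (b + b') = B2 a b + B2 a b' := by
    intro a b b'
    rw [← Finset.sum_add_distrib]
    refine Finset.sum_congr rfl fun i _ => ?_
    rw [DirectSum.add_apply, mul_add, lam_add (hq0 i)]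
  have hB2smull : ∀ (c : ℝ) a b, B2 (c • a) b = c * B2 a b := by
    intro c a b
    rw [Finset.mul_sum]
    refine Finset.sum_congr rfl fun i _ => ?_
    rw [DirectSum.smul_apply, smul_mul_assoc, lam_smul (hq0 i)]
  have hB2smulr : ∀ (c : ℝ) a b, B2 a (c • b) = c * B2 a b := by
    intro c a b
    rw [Finset.mul_sum]
    refine Finset.sum_congr rfl fun i _ => ?_
    rw [DirectSum.smul_apply, mul_smul_comm, lam_smul (hq0 i)]
  -- the X-self-adjointness of the pairing
  have hB2X : ∀ a b, B2 ((Polynomial.X : ℝ[X]) • a) b = B2 a ((Polynomial.X : ℝ[X]) • b) := by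
    intro a b
    refine Finset.sum_congr rfl fun i _ => ?_
    rw [DirectSum.smul_apply, DirectSum.smul_apply]
    rw [quot_smul_eq_mk_mul, quot_smul_eq_mk_mul]
    ring_nf
  -- bundle as a bilinear form on V
  let bβ : LinearMap.BilinForm ℝ (Fin n → ℝ) :=
    LinearMap.mk₂ ℝ (fun u v => B2 (θ u) (θ v))
      (fun u u' v => by
        show B2 (θ (u + u')) (θ v) = B2 (θ u) (θ v) + B2 (θ u') (θ v)
        rw [_root_.map_add]; exact hB2addl _ _ _)
      (fun c u v => by
        show B2 (θ (c • u)) (θ v) = c • B2 (θ u) (θ v)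
        rw [_root_.map_smul, smul_eq_mul]; exact hB2smull _ _ _)
      (fun u v v' => by
        show B2 (θ u) (θ (v + v')) = B2 (θ u) (θ v) + B2 (θ u) (θ v')
        rw [_root_.map_add]; exact hB2addr _ _ _)
      (fun c u v => by
        show B2 (θ u) (θ (c • v)) = c • B2 (θ u) (θ v)
        rw [_root_.map_smul, smul_eq_mul]; exact hB2smulr _ _ _)
  set G : Matrix (Fin n) (Fin n) ℝ := LinearMap.BilinForm.toMatrix' bβ with hG
  have hGapply : ∀ u v, bβ u v = u ⬝ᵥ G *ᵥ v := by
    intro u v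
    rw [hG, ← Matrix.toBilin'_apply', Matrix.toBilin'_toMatrix']
  -- key intertwining: θ (f u) = X • θ u
  have hθf : ∀ u : V, θ (f u) = (Polynomial.X : ℝ[X]) • θ u := by
    intro u
    show ψ' (Module.AEval'.of f (f u)) = (Polynomial.X : ℝ[X]) • ψ' (Module.AEval'.of f u)
    rw [← _root_.map_smul, Module.AEval'.X_smul_of]
  have hselfadj : ∀ u v : V, bβ (f u) v = bβ u (f v) := by
    intro u v
    show B2 (θ (f u)) (θ v) = B2 (θ u) (θ (f v))
    rw [hθf, hθf, hB2X]
  -- nondegeneracy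
  have hnondeg : ∀ u : V, (∀ v : V, bβ u v = 0) → u = 0 := by
    intro u hu
    by_contra hu0
    have ha : θ u ≠ 0 := fun h => hu0 ((map_eq_zero_iff _ θ.injective).mp h)
    have : ∃ i, θ u i ≠ 0 := by
      by_contra h
      push_neg at h
      exact ha (DFinsupp.ext h)
    obtain ⟨i, hi⟩ := this
    obtain ⟨y, hy⟩ := lam_nondeg (hq0 i) (θ u i) hi
    set b : N := DirectSum.of (fun i => ℝ[X] ⧸ Ideal.span {q i}) i y with hb
    have := hu (θ.symm b)
    rw [show bβ u (θ.symm b) = B2 (θ u) (θ (θ.symm b)) from rfl, θ.apply_symm_apply] at this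
    apply hy
    rw [← this]
    rw [show B2 (θ u) b = ∑ j, lam (q j) (θ u j * b j) from rfl]
    rw [Finset.sum_eq_single_of_mem i (Finset.mem_univ i)]
    · rw [hb, DirectSum.of_eq_same]
    · intro j _ hji
      rw [hb, DirectSum.of_eq_of_ne _ _ _ hji, mul_zero, lam_zero (hq0 j)]
  -- conclude: G is invertible and Xᵀ G = G X
  have hGnd : G.Nondegenerate := by
    refine Matrix.nondegenerate_iff_det_ne_zero.mpr
      ((Matrix.separatingLeft_iff_det_ne_zero (M := G)).mp ?_)
    rw [Matrix.separatingLeft_def]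
    intro v hv
    exact hnondeg v fun w => by rw [hGapply]; exact hv w
  have hGdet : IsUnit G := (Matrix.isUnit_iff_isUnit_det G).mpr
    (isUnit_iff_ne_zero.mpr (Matrix.nondegenerate_iff_det_ne_zero.mp hGnd))
  have hkey : Xᵀ * G = G * X := by
    have h1 : ∀ u v : Fin n → ℝ, u ⬝ᵥ (Xᵀ * G) *ᵥ v = u ⬝ᵥ (G * X) *ᵥ v := by
      intro u v
      have h2 := hselfadj u v
      rw [hGapply, hGapply] at h2
      have hfu : f u = X *ᵥ u := rfl
      have hfv : f v = X *ᵥ v := rfl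
      rw [hfu, hfv] at h2
      calc u ⬝ᵥ (Xᵀ * G) *ᵥ v = u ⬝ᵥ Xᵀ *ᵥ (G *ᵥ v) := by rw [Matrix.mulVec_mulVec]
        _ = (X *ᵥ u) ⬝ᵥ (G *ᵥ v) := by
            rw [Matrix.dotProduct_mulVec, Matrix.vecMul_transpose]
        _ = u ⬝ᵥ G *ᵥ (X *ᵥ v) := h2
        _ = u ⬝ᵥ (G * X) *ᵥ v := by rw [Matrix.mulVec_mulVec]
    ext i j
    have h4 := h1 (Pi.single i 1) (Pi.single j 1)
    rwa [Matrix.mulVec_single_one, Matrix.mulVec_single_one,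
      single_one_dotProduct, single_one_dotProduct,
      Matrix.col_apply, Matrix.col_apply] at h4
  -- assemble the GL element
  refine ⟨hGdet.unit, ?_⟩
  have hPcoe : (hGdet.unit : Matrix (Fin n) (Fin n) ℝ) = G := hGdet.unit_spec
  have hinv : G * ((hGdet.unit⁻¹ : GL (Fin n) ℝ) : Matrix (Fin n) (Fin n) ℝ) = 1 := by
    have h5 := hGdet.unit.mul_inv
    rwa [hPcoe] at h5
  calc Xᵀ = Xᵀ * (G * ((hGdet.unit⁻¹ : GL (Fin n) ℝ) : Matrix (Fin n) (Fin n) ℝ)) := by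
        rw [hinv, mul_one]
    _ = (Xᵀ * G) * ((hGdet.unit⁻¹ : GL (Fin n) ℝ) : Matrix (Fin n) (Fin n) ℝ) := by
        rw [mul_assoc]
    _ = (G * X) * ((hGdet.unit⁻¹ : GL (Fin n) ℝ) : Matrix (Fin n) (Fin n) ℝ) := by rw [hkey]
    _ = (hGdet.unit : Matrix (Fin n) (Fin n) ℝ) * X *
        ((hGdet.unit⁻¹ : GL (Fin n) ℝ) : Matrix (Fin n) (Fin n) ℝ) := by rw [hPcoe]
end

section
/- Every element g of the real orthogonal group O(n) is conjugate in O(n) to its inverse g⁻¹ = gᵀ. -/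
open Matrix



/-- `OrthRev g` : there is an orthogonal `h` conjugating `g` to `gᵀ`. -/
def OrthRev {ι : Type*} [Fintype ι] [DecidableEq ι] (g : Matrix ι ι ℝ) : Prop :=
  ∃ h : Matrix ι ι ℝ, hᵀ * h = 1 ∧ h * g = gᵀ * h

lemma orthRev_conj {ι : Type*} [Fintype ι] [DecidableEq ι]
    {Q d : Matrix ι ι ℝ} (hQ : Qᵀ * Q = 1) (hd : OrthRev d) :
    OrthRev (Q * d * Qᵀ) := by
  obtain ⟨h, h1, h2⟩ := hd
  have hQ' : Q * Qᵀ = 1 := mul_eq_one_comm.mp hQ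
  refine ⟨Q * h * Qᵀ, ?_, ?_⟩
  · calc (Q * h * Qᵀ)ᵀ * (Q * h * Qᵀ) = Q * (hᵀ * (Qᵀ * Q) * h) * Qᵀ := by
          simp [Matrix.transpose_mul, Matrix.mul_assoc]
    _ = 1 := by rw [hQ]; simp [Matrix.mul_assoc, h1, hQ']
  · have : (Q * d * Qᵀ)ᵀ = Q * dᵀ * Qᵀ := by simp [Matrix.transpose_mul, Matrix.mul_assoc]
    rw [this]
    calc Q * h * Qᵀ * (Q * d * Qᵀ) = Q * (h * (Qᵀ * Q) * d) * Qᵀ := by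
          simp [Matrix.mul_assoc]
    _ = Q * (dᵀ * h) * Qᵀ := by rw [hQ]; simp [h2, Matrix.mul_assoc]
    _ = Q * dᵀ * Qᵀ * (Q * h * Qᵀ) := by
          calc Q * (dᵀ * h) * Qᵀ = Q * (dᵀ * ((Qᵀ * Q) * h)) * Qᵀ := by rw [hQ]; simp
          _ = _ := by simp [Matrix.mul_assoc]

lemma orthRev_submatrix {ι κ : Type*} [Fintype ι] [DecidableEq ι] [Fintype κ] [DecidableEq κ]
    {d : Matrix ι ι ℝ} (e : κ ≃ ι) (hd : OrthRev d) :
    OrthRev (d.submatrix e e) := by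
  obtain ⟨h, h1, h2⟩ := hd
  refine ⟨h.submatrix e e, ?_, ?_⟩
  · rw [transpose_submatrix, submatrix_mul_equiv, h1, submatrix_one_equiv]
  · rw [submatrix_mul_equiv, transpose_submatrix, submatrix_mul_equiv, h2]

lemma orthRev_blocks {ι κ : Type*} [Fintype ι] [DecidableEq ι] [Fintype κ] [DecidableEq κ]
    {a : Matrix ι ι ℝ} {b : Matrix κ κ ℝ} (ha : OrthRev a) (hb : OrthRev b) :
    OrthRev (fromBlocks a 0 0 b) := by
  obtain ⟨h, h1, h2⟩ := ha
  obtain ⟨h', h1', h2'⟩ := hb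
  refine ⟨fromBlocks h 0 0 h', ?_, ?_⟩
  · rw [fromBlocks_transpose, fromBlocks_multiply]
    simp [h1, h1', fromBlocks_one]
  · rw [fromBlocks_transpose, fromBlocks_multiply, fromBlocks_multiply]
    simp [h2, h2']

lemma orthRev_one_dim (a : Matrix (Fin 1) (Fin 1) ℝ) : OrthRev a := by
  refine ⟨1, by simp, ?_⟩
  have : aᵀ = a := by ext i j; fin_cases i; fin_cases j; rfl
  simp [this]


lemma orthRev_two_dim (g : Matrix (Fin 2) (Fin 2) ℝ) (hg : gᵀ * g = 1) :
    ∃ h : Matrix (Fin 2) (Fin 2) ℝ, hᵀ * h = 1 ∧ h * g = gᵀ * h := by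
  have hg' : g * gᵀ = 1 := mul_eq_one_comm.mp hg
  set p := g 0 0 with hp
  set q := g 0 1 with hq
  set r := g 1 0 with hr
  set s := g 1 1 with hs
  have e1 : p * p + q * q = 1 := by
    have := congrFun (congrFun hg' 0) 0
    simpa [Matrix.mul_apply, Fin.sum_univ_two, Matrix.one_apply] using this
  have e2 : r * r + s * s = 1 := by
    have := congrFun (congrFun hg' 1) 1
    simpa [Matrix.mul_apply, Fin.sum_univ_two, Matrix.one_apply] using this
  have e3 : p * r + q * s = 0 := by
    have := congrFun (congrFun hg' 0) 1
    simpa [Matrix.mul_apply, Fin.sum_univ_two, Matrix.one_apply] using this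
  have hdet : (p * s - q * r) = 1 ∨ (p * s - q * r) = -1 := by
    have hd : g.det * g.det = 1 := by
      have := congrArg Matrix.det hg
      rwa [Matrix.det_mul, Matrix.det_transpose, Matrix.det_one] at this
    have := mul_self_eq_one_iff.mp hd
    rwa [Matrix.det_fin_two, ← hp, ← hq, ← hr, ← hs] at this
  rcases hdet with hd | hd
  · -- rotation: r = -q, s = p
    have key : (r + q) ^ 2 + (s - p) ^ 2 = 0 := by nlinarith
    have hrq : r = -q := by nlinarith [sq_nonneg (r + q), sq_nonneg (s - p)]
    refine ⟨!![1, 0; 0, -1], by ext i j; fin_cases i <;> fin_cases j <;> simp [Matrix.mul_apply, Fin.sum_univ_two, Matrix.transpose_apply, Matrix.vecHead, Matrix.vecTail], ?_⟩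
    ext i j
    fin_cases i <;> fin_cases j <;>
      simp [Matrix.mul_apply, Fin.sum_univ_two, transpose_apply, ← hp, ← hq, ← hr, ← hs, hrq] <;> ring
  · -- reflection: g is symmetric
    have key : (r - q) ^ 2 + (s + p) ^ 2 = 0 := by nlinarith
    have hrq : r = q := by nlinarith [sq_nonneg (r - q), sq_nonneg (s + p)]
    refine ⟨1, by simp, ?_⟩
    have : gᵀ = g := by
      ext i j
      fin_cases i <;> fin_cases j <;> simp [transpose_apply, ← hq, ← hr, hrq]
    simp [this]


-- dot product of coercions of EuclideanSpace vectors
lemma euclid_dot {n : ℕ} (x y : EuclideanSpace ℝ (Fin n)) :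
    (inner ℝ x y : ℝ) = (⇑x) ⬝ᵥ (⇑y) := by
  simp [PiLp.inner_apply, dotProduct, mul_comm]

lemma extend_one {n : ℕ} (hn : 0 < n) (v : Fin n → ℝ) (hv : v ⬝ᵥ v = 1) :
    ∃ c : Fin n → (Fin n → ℝ),
      (∀ i j, c i ⬝ᵥ c j = if i = j then 1 else 0) ∧ c ⟨0, hn⟩ = v := by
  classical
  let v' : EuclideanSpace ℝ (Fin n) := (WithLp.equiv 2 _).symm v
  have card : Module.finrank ℝ (EuclideanSpace ℝ (Fin n)) = Fintype.card (Fin n) := by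
    simp [finrank_euclideanSpace]
  let f : Fin n → EuclideanSpace ℝ (Fin n) := fun _ => v'
  have horth : Orthonormal ℝ (Set.restrict {(⟨0, hn⟩ : Fin n)} f) := by
    rw [orthonormal_iff_ite]
    rintro ⟨i, hi⟩ ⟨j, hj⟩
    simp only [Set.mem_singleton_iff] at hi hj
    subst hi; subst hj
    simp only [Subtype.mk.injEq, f]
    rw [if_pos trivial, euclid_dot]
    simpa [dotProduct, v', PiLp.toLp_apply, Set.restrict] using hv
  obtain ⟨b, hb⟩ := horth.exists_orthonormalBasis_extension_of_card_eq card
  exact ⟨fun i => ⇑(b i), by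
    intro i j
    rw [← euclid_dot, orthonormal_iff_ite.mp b.orthonormal], by
    simpa [f, v'] using congrArg (fun x : EuclideanSpace ℝ (Fin n) => ⇑x) (hb ⟨0, hn⟩ rfl)⟩

lemma extend_two {n : ℕ} (v u : Fin n → ℝ) (hv : v ⬝ᵥ v = 1) (hu : u ⬝ᵥ u = 1)
    (hvu : v ⬝ᵥ u = 0) :
    ∃ (hn : 2 ≤ n) (c : Fin n → (Fin n → ℝ)),
      (∀ i j, c i ⬝ᵥ c j = if i = j then 1 else 0) ∧
      c ⟨0, by omega⟩ = v ∧ c ⟨1, by omega⟩ = u := by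
  classical
  let v' : EuclideanSpace ℝ (Fin n) := (WithLp.equiv 2 _).symm v
  let u' : EuclideanSpace ℝ (Fin n) := (WithLp.equiv 2 _).symm u
  have hdots : ∀ x y : Fin n → ℝ,
      (inner ℝ ((WithLp.equiv 2 _).symm x : EuclideanSpace ℝ (Fin n))
        ((WithLp.equiv 2 _).symm y) : ℝ) = x ⬝ᵥ y := by
    intro x y
    rw [euclid_dot]
    simp [dotProduct, PiLp.toLp_apply]
  have huv : (inner ℝ u' v' : ℝ) = 0 := by
    rw [hdots, dotProduct_comm]; exact hvu
  have f2 : Orthonormal ℝ (![v', u']) := by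
    rw [orthonormal_iff_ite]
    intro i j
    fin_cases i <;> fin_cases j <;>
      simp [-inner_self_eq_norm_sq_to_K, v', u', EuclideanSpace.inner_toLp_toLp, hv, hu, hvu, dotProduct_comm u v, huv]
  have hn : 2 ≤ n := by
    have := f2.linearIndependent.fintype_card_le_finrank
    simpa [finrank_euclideanSpace] using this
  refine ⟨hn, ?_⟩
  have card : Module.finrank ℝ (EuclideanSpace ℝ (Fin n)) = Fintype.card (Fin n) := by
    simp [finrank_euclideanSpace]
  let i0 : Fin n := ⟨0, by omega⟩
  let i1 : Fin n := ⟨1, by omega⟩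
  let f : Fin n → EuclideanSpace ℝ (Fin n) := fun i => if i = i0 then v' else u'
  have horth : Orthonormal ℝ (Set.restrict {i0, i1} f) := by
    rw [orthonormal_iff_ite]
    rintro ⟨i, hi⟩ ⟨j, hj⟩
    have h01 : i0 ≠ i1 := by simp [i0, i1, Fin.ext_iff]
    simp only [Set.mem_insert_iff, Set.mem_singleton_iff] at hi hj
    rcases hi with rfl | rfl <;> rcases hj with rfl | rfl <;>
      simp [-inner_self_eq_norm_sq_to_K, Set.restrict, f, h01, h01.symm, Subtype.ext_iff, EuclideanSpace.inner_toLp_toLp, hv, hu, hvu, dotProduct_comm u v, huv, v', u']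
  obtain ⟨b, hb⟩ := horth.exists_orthonormalBasis_extension_of_card_eq card
  refine ⟨fun i => ⇑(b i), ?_, ?_, ?_⟩
  · intro i j
    rw [← euclid_dot, orthonormal_iff_ite.mp b.orthonormal]
  · have := hb i0 (by simp)
    have h2 := congrArg (fun x : EuclideanSpace ℝ (Fin n) => ⇑x) this
    simpa [f, v'] using h2
  · have := hb i1 (by simp)
    have h2 := congrArg (fun x : EuclideanSpace ℝ (Fin n) => ⇑x) this
    have h01 : i1 ≠ i0 := by simp [i0, i1, Fin.ext_iff]
    simpa [f, h01, u'] using h2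

lemma dot_mulVec_left {n : ℕ} (A : Matrix (Fin n) (Fin n) ℝ) (x y : Fin n → ℝ) :
    (A *ᵥ x) ⬝ᵥ y = x ⬝ᵥ (Aᵀ *ᵥ y) := by
  rw [Matrix.dotProduct_mulVec, Matrix.vecMul_transpose]

lemma exists_eigen {n : ℕ} (hn : 0 < n) (S : Matrix (Fin n) (Fin n) ℝ) (hS : S.IsHermitian) :
    ∃ (v : Fin n → ℝ) (lam : ℝ), v ⬝ᵥ v = 1 ∧ S *ᵥ v = lam • v := by
  let i : Fin n := ⟨0, hn⟩
  refine ⟨⇑(hS.eigenvectorBasis i), hS.eigenvalues i, ?_, hS.mulVec_eigenvectorBasis i⟩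
  have := orthonormal_iff_ite.mp hS.eigenvectorBasis.orthonormal i i
  rw [euclid_dot] at this
  simpa using this

lemma split {n : ℕ} (hn : 0 < n) (g : Matrix (Fin n) (Fin n) ℝ) (hg : gᵀ * g = 1) :
    ∃ (k m : ℕ) (e : (Fin k ⊕ Fin m) ≃ Fin n) (Q : Matrix (Fin n) (Fin n) ℝ)
      (d : Matrix (Fin k ⊕ Fin m) (Fin k ⊕ Fin m) ℝ),
      0 < k ∧ k ≤ 2 ∧ m < n ∧ Qᵀ * Q = 1 ∧ d.toBlocks₁₂ = 0 ∧ d.toBlocks₂₁ = 0 ∧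
      g = Q * d.submatrix e.symm e.symm * Qᵀ := by
  classical
  have hg' : g * gᵀ = 1 := mul_eq_one_comm.mp hg
  have hS : (g + gᵀ).IsHermitian := by
    show (g + gᵀ)ᴴ = g + gᵀ
    ext i j
    simp [Matrix.conjTranspose_apply, Matrix.transpose_apply, add_comm]
  obtain ⟨v, lam, hv1, hv2⟩ := exists_eigen hn (g + gᵀ) hS
  rw [Matrix.add_mulVec] at hv2
  set w : Fin n → ℝ := g *ᵥ v with hw
  have hgtv : gᵀ *ᵥ v = lam • v - w := by rw [← hv2]; abel
  have hgtw : gᵀ *ᵥ w = v := by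
    rw [hw, Matrix.mulVec_mulVec, hg, Matrix.one_mulVec]
  have hgw : g *ᵥ w = lam • w - v := by
    have := congrArg (fun x => g *ᵥ x) hgtv
    simp only [Matrix.mulVec_smul, Matrix.mulVec_sub] at this
    rw [Matrix.mulVec_mulVec, hg', Matrix.one_mulVec] at this
    rw [← hw] at this
    have h2 : v = lam • w - g *ᵥ w := this
    rw [eq_sub_iff_add_eq] at h2 ⊢
    rw [← h2]; abel
  set c : ℝ := v ⬝ᵥ w with hc
  set u' : Fin n → ℝ := w - c • v with hu'def
  by_cases hcase : u' = 0
  · -- one-dimensional invariant subspace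
    have hwv : w = c • v := by
      have := sub_eq_zero.mp hcase
      exact this
    obtain ⟨cc, hcc, hcc0⟩ := extend_one hn v hv1
    set i0 : Fin n := ⟨0, hn⟩
    let Q : Matrix (Fin n) (Fin n) ℝ := Matrix.of fun i j => cc j i
    have hQ : Qᵀ * Q = 1 := by
      ext i j
      simpa [Q, Matrix.mul_apply, Matrix.transpose_apply, Matrix.one_apply, dotProduct]
        using hcc i j
    set M : Matrix (Fin n) (Fin n) ℝ := Qᵀ * g * Q with hM
    have hMdot : ∀ i j, M i j = cc i ⬝ᵥ (g *ᵥ cc j) := by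
      intro i j
      simp only [hM, Matrix.mul_apply, Matrix.transpose_apply, dotProduct, Matrix.mulVec, Q,
        Matrix.of_apply, Finset.sum_mul, Finset.mul_sum]
      rw [Finset.sum_comm]
      exact Finset.sum_congr rfl fun p _ => Finset.sum_congr rfl fun q _ => by ring
    have hvi : ∀ i, i ≠ i0 → cc i ⬝ᵥ v = 0 := by
      intro i hi
      have := hcc i i0
      rw [hcc0, if_neg hi] at this
      exact this
    have hcol : ∀ i, i ≠ i0 → M i i0 = 0 := by
      intro i hi
      rw [hMdot, hcc0, ← hw, hwv]
      simp [dotProduct_smul, hvi i hi]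
    have hrow : ∀ j, j ≠ i0 → M i0 j = 0 := by
      intro j hj
      rw [hMdot, hcc0]
      have : v ⬝ᵥ (g *ᵥ cc j) = (gᵀ *ᵥ v) ⬝ᵥ cc j := by
        rw [dot_mulVec_left, Matrix.transpose_transpose]
      rw [this, hgtv, hwv]
      have : lam • v - c • v = (lam - c) • v := by module
      rw [this, smul_dotProduct, dotProduct_comm, hvi j hj, smul_eq_mul, mul_zero]
    refine ⟨1, n - 1, finSumFinEquiv.trans (finCongr (by omega)), Q,
      M.submatrix (finSumFinEquiv.trans (finCongr (by omega))) (finSumFinEquiv.trans (finCongr (by omega))),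
      one_pos, by omega, by omega, hQ, ?_, ?_, ?_⟩
    · ext i j
      have hei : (finSumFinEquiv.trans (finCongr (by omega : 1 + (n-1) = n))) (Sum.inl i) = i0 := by
        ext
        simp [finSumFinEquiv_apply_left, Fin.ext_iff, Fin.val_eq_zero i, i0]
      have hej : (finSumFinEquiv.trans (finCongr (by omega : 1 + (n-1) = n))) (Sum.inr j) ≠ i0 := by
        simp [finSumFinEquiv_apply_right, Fin.ext_iff, i0]
      simp only [Matrix.toBlocks₁₂, Matrix.of_apply, Matrix.submatrix_apply, Matrix.zero_apply]
      rw [hei]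
      exact hrow _ hej
    · ext i j
      have hej : (finSumFinEquiv.trans (finCongr (by omega : 1 + (n-1) = n))) (Sum.inl j) = i0 := by
        ext
        simp [finSumFinEquiv_apply_left, Fin.ext_iff, Fin.val_eq_zero j, i0]
      have hei : (finSumFinEquiv.trans (finCongr (by omega : 1 + (n-1) = n))) (Sum.inr i) ≠ i0 := by
        simp [finSumFinEquiv_apply_right, Fin.ext_iff, i0]
      simp only [Matrix.toBlocks₂₁, Matrix.of_apply, Matrix.submatrix_apply, Matrix.zero_apply]
      rw [hej]
      exact hcol _ hei
    · have hsub : (M.submatrix (finSumFinEquiv.trans (finCongr (by omega : 1 + (n-1) = n)))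
          (finSumFinEquiv.trans (finCongr (by omega : 1 + (n-1) = n)))).submatrix
          (finSumFinEquiv.trans (finCongr (by omega : 1 + (n-1) = n))).symm
          (finSumFinEquiv.trans (finCongr (by omega : 1 + (n-1) = n))).symm = M := by
        ext i j
        simp
      rw [hsub, hM]
      have hQ' : Q * Qᵀ = 1 := mul_eq_one_comm.mp hQ
      calc g = (Q * Qᵀ) * g * (Q * Qᵀ) := by rw [hQ']; simp
      _ = Q * (Qᵀ * g * Q) * Qᵀ := by simp only [Matrix.mul_assoc]
  · -- two-dimensional invariant subspace
    have hvu' : v ⬝ᵥ u' = 0 := by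
      rw [hu'def]
      simp [dotProduct_sub, dotProduct_smul, hv1, hc]
    have hnn : (0:ℝ) ≤ u' ⬝ᵥ u' := Finset.sum_nonneg fun i _ => mul_self_nonneg _
    have hpos : 0 < u' ⬝ᵥ u' :=
      lt_of_le_of_ne hnn fun h => hcase (dotProduct_self_eq_zero.mp h.symm)
    set μ : ℝ := Real.sqrt (u' ⬝ᵥ u') with hμ
    have hμpos : 0 < μ := Real.sqrt_pos.mpr hpos
    have hμsq : μ * μ = u' ⬝ᵥ u' := Real.mul_self_sqrt hpos.le
    set u : Fin n → ℝ := μ⁻¹ • u' with hu_def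
    have hu1 : u ⬝ᵥ u = 1 := by
      rw [hu_def]
      rw [smul_dotProduct, dotProduct_smul]
      rw [smul_eq_mul, smul_eq_mul, ← hμsq]
      field_simp [hμpos.ne']
    have hvu : v ⬝ᵥ u = 0 := by
      rw [hu_def, dotProduct_smul, hvu', smul_zero]
    have hwvu : w = c • v + μ • u := by
      rw [hu_def, smul_smul, mul_inv_cancel₀ hμpos.ne', one_smul, hu'def]
      abel
    obtain ⟨hn2, cc, hcc, hcc0, hcc1⟩ := extend_two v u hv1 hu1 hvu
    set i0 : Fin n := ⟨0, by omega⟩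
    set i1 : Fin n := ⟨1, by omega⟩
    have hvi : ∀ i, i ≠ i0 → cc i ⬝ᵥ v = 0 := by
      intro i hi
      have := hcc i i0
      rw [hcc0, if_neg hi] at this
      exact this
    have hui : ∀ i, i ≠ i1 → cc i ⬝ᵥ u = 0 := by
      intro i hi
      have := hcc i i1
      rw [hcc1, if_neg hi] at this
      exact this
    have hwi : ∀ i, i ≠ i0 → i ≠ i1 → cc i ⬝ᵥ w = 0 := by
      intro i h0 h1
      rw [hwvu]
      simp [dotProduct_add, dotProduct_smul, hvi i h0, hui i h1]
    have hspanzero : ∀ (i : Fin n), i ≠ i0 → i ≠ i1 → ∀ (x : Fin n → ℝ) (α β : ℝ),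
        x = α • v + β • w → cc i ⬝ᵥ x = 0 := by
      intro i h0 h1 x α β hx
      rw [hx]
      simp [dotProduct_add, dotProduct_smul, hvi i h0, hwi i h0 h1]
    -- images of v and u under g and gᵀ lie in span {v, w}
    have hgv : g *ᵥ v = (0:ℝ) • v + (1:ℝ) • w := by rw [← hw]; module
    have hgu : g *ᵥ u = (-μ⁻¹) • v + (μ⁻¹ * (lam - c)) • w := by
      rw [hu_def, hu'def, Matrix.mulVec_smul, Matrix.mulVec_sub, Matrix.mulVec_smul, hgw, ← hw]
      module
    have hgtv' : gᵀ *ᵥ v = lam • v + (-1 : ℝ) • w := by rw [hgtv]; module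
    have hgtu : gᵀ *ᵥ u = (μ⁻¹ * (1 - c * lam)) • v + (μ⁻¹ * c) • w := by
      rw [hu_def, hu'def, Matrix.mulVec_smul, Matrix.mulVec_sub, Matrix.mulVec_smul, hgtw, hgtv]
      module
    let Q : Matrix (Fin n) (Fin n) ℝ := Matrix.of fun i j => cc j i
    have hQ : Qᵀ * Q = 1 := by
      ext i j
      simpa [Q, Matrix.mul_apply, Matrix.transpose_apply, Matrix.one_apply, dotProduct]
        using hcc i j
    set M : Matrix (Fin n) (Fin n) ℝ := Qᵀ * g * Q with hM
    have hMdot : ∀ i j, M i j = cc i ⬝ᵥ (g *ᵥ cc j) := by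
      intro i j
      simp only [hM, Matrix.mul_apply, Matrix.transpose_apply, dotProduct, Matrix.mulVec, Q,
        Matrix.of_apply, Finset.sum_mul, Finset.mul_sum]
      rw [Finset.sum_comm]
      exact Finset.sum_congr rfl fun p _ => Finset.sum_congr rfl fun q _ => by ring
    have hcol : ∀ i, i ≠ i0 → i ≠ i1 → ∀ j, (j = i0 ∨ j = i1) → M i j = 0 := by
      intro i h0 h1 j hj
      rw [hMdot]
      rcases hj with rfl | rfl
      · rw [hcc0]; exact hspanzero i h0 h1 _ _ _ hgv
      · rw [hcc1]; exact hspanzero i h0 h1 _ _ _ hgu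
    have hrow : ∀ i, (i = i0 ∨ i = i1) → ∀ j, j ≠ i0 → j ≠ i1 → M i j = 0 := by
      intro i hi j h0 h1
      rw [hMdot]
      have hflip : cc i ⬝ᵥ (g *ᵥ cc j) = (gᵀ *ᵥ cc i) ⬝ᵥ cc j := by
        rw [dot_mulVec_left, Matrix.transpose_transpose]
      rw [hflip, dotProduct_comm]
      rcases hi with rfl | rfl
      · rw [hcc0]; exact hspanzero j h0 h1 _ _ _ hgtv'
      · rw [hcc1]; exact hspanzero j h0 h1 _ _ _ hgtu
    have key : ∀ i j : Fin n, ((i.val < 2 ∧ 2 ≤ j.val) ∨ (j.val < 2 ∧ 2 ≤ i.val)) → M i j = 0 := by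
      intro i j hij
      have hi0 : ∀ p : Fin n, 2 ≤ p.val → p ≠ i0 ∧ p ≠ i1 := by
        intro p hp
        constructor <;> (intro h; rw [h] at hp; simp [i0, i1] at hp) <;> omega
      have hlt : ∀ p : Fin n, p.val < 2 → p = i0 ∨ p = i1 := by
        intro p hp
        have hp2 : p.val = 0 ∨ p.val = 1 := by omega
        rcases hp2 with h | h
        · left; exact Fin.ext h
        · right; exact Fin.ext h
      rcases hij with ⟨hi, hj⟩ | ⟨hj, hi⟩
      · exact hrow i (hlt i hi) j (hi0 j hj).1 (hi0 j hj).2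
      · exact hcol i (hi0 i hi).1 (hi0 i hi).2 j (hlt j hj)
    refine ⟨2, n - 2, finSumFinEquiv.trans (finCongr (by omega)), Q,
      M.submatrix (finSumFinEquiv.trans (finCongr (by omega))) (finSumFinEquiv.trans (finCongr (by omega))),
      two_pos, le_refl 2, by omega, hQ, ?_, ?_, ?_⟩
    · ext i j
      simp only [Matrix.toBlocks₁₂, Matrix.of_apply, Matrix.submatrix_apply, Matrix.zero_apply]
      apply key
      left
      constructor
      · simpa [finSumFinEquiv_apply_left] using i.isLt
      · simp [finSumFinEquiv_apply_right]
    · ext i j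
      simp only [Matrix.toBlocks₂₁, Matrix.of_apply, Matrix.submatrix_apply, Matrix.zero_apply]
      apply key
      right
      constructor
      · simpa [finSumFinEquiv_apply_left] using j.isLt
      · simp [finSumFinEquiv_apply_right]
    · have hsub : (M.submatrix (finSumFinEquiv.trans (finCongr (by omega : 2 + (n-2) = n)))
          (finSumFinEquiv.trans (finCongr (by omega : 2 + (n-2) = n)))).submatrix
          (finSumFinEquiv.trans (finCongr (by omega : 2 + (n-2) = n))).symm
          (finSumFinEquiv.trans (finCongr (by omega : 2 + (n-2) = n))).symm = M := by
        ext i j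
        simp
      rw [hsub, hM]
      have hQ' : Q * Qᵀ = 1 := mul_eq_one_comm.mp hQ
      calc g = (Q * Qᵀ) * g * (Q * Qᵀ) := by rw [hQ']; simp
      _ = Q * (Qᵀ * g * Q) * Qᵀ := by simp only [Matrix.mul_assoc]

lemma ortho_of_conj {n : ℕ} {Q N g : Matrix (Fin n) (Fin n) ℝ} (hQ : Qᵀ * Q = 1)
    (h : g = Q * N * Qᵀ) (hg : gᵀ * g = 1) : Nᵀ * N = 1 := by
  have hQ' : Q * Qᵀ = 1 := mul_eq_one_comm.mp hQ
  subst h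
  have expand : (Q * N * Qᵀ)ᵀ * (Q * N * Qᵀ) = Q * (Nᵀ * N) * Qᵀ := by
    calc (Q * N * Qᵀ)ᵀ * (Q * N * Qᵀ) = Q * (Nᵀ * ((Qᵀ * Q) * N)) * Qᵀ := by
          simp [Matrix.transpose_mul, Matrix.mul_assoc]
    _ = Q * (Nᵀ * N) * Qᵀ := by rw [hQ, Matrix.one_mul]
  rw [expand] at hg
  calc Nᵀ * N = Qᵀ * (Q * (Nᵀ * N) * Qᵀ) * Q := by
        calc Nᵀ * N = (Qᵀ * Q) * (Nᵀ * N) * (Qᵀ * Q) := by rw [hQ]; simp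
        _ = Qᵀ * (Q * (Nᵀ * N) * Qᵀ) * Q := by simp only [Matrix.mul_assoc]
  _ = 1 := by rw [hg]; simp [hQ]

theorem rev_all : ∀ (n : ℕ) (g : Matrix (Fin n) (Fin n) ℝ), gᵀ * g = 1 → OrthRev g := by
  intro n
  induction n using Nat.strong_induction_on with
  | _ n IH =>
    intro g hg
    rcases Nat.eq_zero_or_pos n with rfl | hn
    · exact ⟨1, by simp, by rw [Subsingleton.elim gᵀ g, Matrix.one_mul, Matrix.mul_one]⟩
    obtain ⟨k, m, e, Q, d, hk0, hk2, hmn, hQ, h12, h21, hdecomp⟩ := split hn g hg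
    have hN : (d.submatrix e.symm e.symm)ᵀ * (d.submatrix e.symm e.symm) = 1 :=
      ortho_of_conj hQ hdecomp hg
    have hd : dᵀ * d = 1 := by
      have hds : (d.submatrix e.symm e.symm).submatrix e e = d := by
        ext i j
        simp
      calc dᵀ * d = ((d.submatrix e.symm e.symm).submatrix e e)ᵀ *
            ((d.submatrix e.symm e.symm).submatrix e e) := by rw [hds]
      _ = ((d.submatrix e.symm e.symm)ᵀ * (d.submatrix e.symm e.symm)).submatrix e e := by
            rw [transpose_submatrix, submatrix_mul_equiv]
      _ = 1 := by rw [hN, submatrix_one_equiv]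
    have hdblocks : d = fromBlocks d.toBlocks₁₁ 0 0 d.toBlocks₂₂ := by
      conv_lhs => rw [← fromBlocks_toBlocks d]
      rw [h12, h21]
    have hblockortho : (fromBlocks (d.toBlocks₁₁ᵀ * d.toBlocks₁₁) 0 0
        (d.toBlocks₂₂ᵀ * d.toBlocks₂₂)) = (1 : Matrix (Fin k ⊕ Fin m) (Fin k ⊕ Fin m) ℝ) := by
      rw [← hd]
      conv_rhs => rw [hdblocks]
      rw [fromBlocks_transpose, fromBlocks_multiply]
      congr 1 <;> simp
    have ha : d.toBlocks₁₁ᵀ * d.toBlocks₁₁ = 1 := by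
      have := congrArg Matrix.toBlocks₁₁ hblockortho
      rwa [Matrix.toBlocks_fromBlocks₁₁, ← fromBlocks_one, Matrix.toBlocks_fromBlocks₁₁] at this
    have hb : d.toBlocks₂₂ᵀ * d.toBlocks₂₂ = 1 := by
      have := congrArg Matrix.toBlocks₂₂ hblockortho
      rwa [Matrix.toBlocks_fromBlocks₂₂, ← fromBlocks_one, Matrix.toBlocks_fromBlocks₂₂] at this
    have reva : OrthRev d.toBlocks₁₁ := by
      interval_cases k
      · exact orthRev_one_dim _
      · exact orthRev_two_dim _ ha
    have revb : OrthRev d.toBlocks₂₂ := IH m hmn _ hb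
    have revd : OrthRev d := by
      rw [hdblocks]
      exact orthRev_blocks reva revb
    rw [hdecomp]
    exact orthRev_conj hQ (orthRev_submatrix e.symm revd)

/-- Every element of the real orthogonal group `O(n)` is conjugate in `O(n)` to its inverse. -/
theorem orthogonal_conj_inv (n : ℕ) (g : Matrix.orthogonalGroup (Fin n) ℝ) :
    ∃ h : Matrix.orthogonalGroup (Fin n) ℝ, g⁻¹ = h * g * h⁻¹ := by
  have hg : (g : Matrix (Fin n) (Fin n) ℝ)ᵀ * (g : Matrix (Fin n) (Fin n) ℝ) = 1 := by
    have := g.2.1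
    rwa [Matrix.star_eq_conjTranspose, Matrix.conjTranspose_eq_transpose_of_trivial] at this
  obtain ⟨h0, h1, h2⟩ := rev_all n g hg
  have h1' : h0 * h0ᵀ = 1 := mul_eq_one_comm.mp h1
  have hstar : star h0 = h0ᵀ := by
    rw [Matrix.star_eq_conjTranspose, Matrix.conjTranspose_eq_transpose_of_trivial]
  have hmem : h0 ∈ Matrix.orthogonalGroup (Fin n) ℝ := ⟨by rw [hstar]; exact h1, by rw [hstar]; exact h1'⟩
  refine ⟨⟨h0, hmem⟩, ?_⟩
  apply Subtype.ext
  rw [Matrix.UnitaryGroup.inv_val, Matrix.UnitaryGroup.mul_val, Matrix.UnitaryGroup.mul_val,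
    Matrix.UnitaryGroup.inv_val]
  show star (g : Matrix (Fin n) (Fin n) ℝ) = h0 * (g : Matrix (Fin n) (Fin n) ℝ) * star h0
  rw [Matrix.star_eq_conjTranspose, Matrix.star_eq_conjTranspose,
    Matrix.conjTranspose_eq_transpose_of_trivial, Matrix.conjTranspose_eq_transpose_of_trivial]
  calc (g : Matrix (Fin n) (Fin n) ℝ)ᵀ = (g : Matrix (Fin n) (Fin n) ℝ)ᵀ * (h0 * h0ᵀ) := by
        rw [h1', Matrix.mul_one]
  _ = ((g : Matrix (Fin n) (Fin n) ℝ)ᵀ * h0) * h0ᵀ := by rw [Matrix.mul_assoc]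
  _ = (h0 * (g : Matrix (Fin n) (Fin n) ℝ)) * h0ᵀ := by rw [h2]
end
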